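/- If (w,H) ∈ S[e] (i.e., (N/2)·λ_max[w⊗w − H] < e), then (1/2)|w|² < e and the operator norm of H is at most 2e(N−1)/N. -/

import Mathlib

open Matrix BigOperators

section
variable {N : ℕ} (A : Matrix (Fin N) (Fin N) ℝ) (hA : A.IsHermitian)

noncomputable def evec (i : Fin N) : Fin N → ℝ := fun j => hA.eigenvectorBasis i j

lemma evec_mulVec (i : Fin N) : A.mulVec (evec A hA i) = hA.eigenvalues i • evec A hA i :=
  hA.mulVec_eigenvectorBasis i

lemma rayleigh_expand (ξ : Fin N → ℝ) :
    ξ ⬝ᵥ A.mulVec ξ = ∑ i, hA.eigenvalues i * (evec A hA i ⬝ᵥ ξ) ^ 2 := by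
  have key := OrthonormalBasis.sum_inner_mul_inner (𝕜 := ℝ)
    hA.eigenvectorBasis ((WithLp.equiv 2 (Fin N → ℝ)).symm ξ) ((WithLp.equiv 2 (Fin N → ℝ)).symm (A.mulVec ξ))
  simp only [PiLp.inner_apply, RCLike.inner_apply, conj_trivial, WithLp.equiv_symm_apply, PiLp.toLp_apply] at key
  have htr : Aᵀ = A := by
    have := hA.eq
    rwa [conjTranspose_eq_transpose_of_trivial] at this
  have hsym : ∀ i, evec A hA i ⬝ᵥ A.mulVec ξ = hA.eigenvalues i * (evec A hA i ⬝ᵥ ξ) := by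
    intro i
    rw [dotProduct_mulVec, ← mulVec_transpose, htr, evec_mulVec, smul_dotProduct, smul_eq_mul]
  calc ξ ⬝ᵥ A.mulVec ξ = ∑ i, (evec A hA i ⬝ᵥ ξ) * (evec A hA i ⬝ᵥ A.mulVec ξ) := by
        rw [dotProduct_comm ξ]
        simp only [dotProduct, ← key, evec]
        refine Finset.sum_congr rfl fun i _ => ?_
        congr 1
        exact Finset.sum_congr rfl fun j _ => mul_comm _ _
    _ = _ := by
        refine Finset.sum_congr rfl fun i _ => ?_
        rw [hsym]; ring

lemma dot_self_eigen (ξ : Fin N → ℝ) (hξ : (∑ i, ξ i ^ 2) = 1) :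
    ∑ i, (evec A hA i ⬝ᵥ ξ) ^ 2 = 1 := by
  have key := OrthonormalBasis.sum_inner_mul_inner (𝕜 := ℝ)
    hA.eigenvectorBasis ((WithLp.equiv 2 (Fin N → ℝ)).symm ξ) ((WithLp.equiv 2 (Fin N → ℝ)).symm ξ)
  simp only [PiLp.inner_apply, RCLike.inner_apply, conj_trivial, WithLp.equiv_symm_apply, PiLp.toLp_apply] at key
  calc ∑ i, (evec A hA i ⬝ᵥ ξ) ^ 2
      = ∑ i, (∑ j, ξ j * evec A hA i j) * ∑ j, evec A hA i j * ξ j := by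
        refine Finset.sum_congr rfl fun i _ => ?_
        rw [sq]; congr 1
        exact Finset.sum_congr rfl fun j _ => mul_comm _ _
    _ = ∑ j, ξ j * ξ j := by rw [← key]; exact Finset.sum_congr rfl fun i _ => mul_comm _ _
    _ = 1 := by rw [← hξ]; exact Finset.sum_congr rfl fun i _ => (sq (ξ i)).symm

lemma evec_unit (i : Fin N) : ∑ j, (evec A hA i j) ^ 2 = 1 := by
  have := hA.eigenvectorBasis.orthonormal.1 i
  rw [EuclideanSpace.norm_eq] at this
  have h2 : ∑ j, (evec A hA i j) ^ 2 = ∑ j, ‖hA.eigenvectorBasis i j‖ ^ 2 := by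
    refine Finset.sum_congr rfl fun j _ => ?_
    rw [Real.norm_eq_abs, sq_abs]; rfl
  rw [h2]
  exact Real.sqrt_eq_one.mp this

end

lemma univ_ne {N : ℕ} (hN : 0 < N) : (Finset.univ : Finset (Fin N)).Nonempty :=
  ⟨⟨0, hN⟩, Finset.mem_univ _⟩


/-- The largest eigenvalue of a symmetric matrix, via the variational (Rayleigh) characterization. -/
noncomputable def lamMax {N : ℕ} (A : Matrix (Fin N) (Fin N) ℝ) : ℝ :=
  sSup {x : ℝ | ∃ ξ : Fin N → ℝ, (∑ i, ξ i ^ 2) = 1 ∧ x = ξ ⬝ᵥ A.mulVec ξ}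

/-- The operator norm of a symmetric matrix: the largest absolute value of an eigenvalue. -/
noncomputable def symOpNorm {N : ℕ} (A : Matrix (Fin N) (Fin N) ℝ) : ℝ :=
  max (lamMax A) (lamMax (-A))

section
variable {N : ℕ} (A : Matrix (Fin N) (Fin N) ℝ) (hA : A.IsHermitian)
include hA

lemma evec_rayleigh (i : Fin N) : evec A hA i ⬝ᵥ A.mulVec (evec A hA i) = hA.eigenvalues i := by
  rw [evec_mulVec, dotProduct_smul, smul_eq_mul]
  have : evec A hA i ⬝ᵥ evec A hA i = 1 := by
    rw [← evec_unit A hA i]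
    exact Finset.sum_congr rfl fun j _ => (sq _).symm
  rw [this, mul_one]

lemma eig_mem (i : Fin N) :
    hA.eigenvalues i ∈ {x : ℝ | ∃ ξ : Fin N → ℝ, (∑ i, ξ i ^ 2) = 1 ∧ x = ξ ⬝ᵥ A.mulVec ξ} :=
  ⟨evec A hA i, evec_unit A hA i, (evec_rayleigh A hA i).symm⟩

lemma ray_le_max (hN : 0 < N) (ξ : Fin N → ℝ) (hξ : (∑ i, ξ i ^ 2) = 1) :
    ξ ⬝ᵥ A.mulVec ξ ≤ Finset.univ.sup' (univ_ne hN) hA.eigenvalues := by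
  rw [rayleigh_expand A hA ξ]
  calc ∑ i, hA.eigenvalues i * (evec A hA i ⬝ᵥ ξ) ^ 2
      ≤ ∑ i, (Finset.univ.sup' (univ_ne hN) hA.eigenvalues) * (evec A hA i ⬝ᵥ ξ) ^ 2 :=
        Finset.sum_le_sum fun i _ =>
          mul_le_mul_of_nonneg_right (Finset.le_sup' _ (Finset.mem_univ i)) (sq_nonneg _)
    _ = _ := by rw [← Finset.mul_sum, dot_self_eigen A hA ξ hξ, mul_one]

lemma ray_bddAbove (hN : 0 < N) :
    BddAbove {x : ℝ | ∃ ξ : Fin N → ℝ, (∑ i, ξ i ^ 2) = 1 ∧ x = ξ ⬝ᵥ A.mulVec ξ} := by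
  refine ⟨Finset.univ.sup' (univ_ne hN) hA.eigenvalues, ?_⟩
  rintro x ⟨ξ, hξ, rfl⟩
  exact ray_le_max A hA hN ξ hξ

lemma rayleigh_le_lamMax (hN : 0 < N) (ξ : Fin N → ℝ) (hξ : (∑ i, ξ i ^ 2) = 1) :
    ξ ⬝ᵥ A.mulVec ξ ≤ lamMax A :=
  le_csSup (ray_bddAbove A hA hN) ⟨ξ, hξ, rfl⟩

lemma lamMax_le (hN : 0 < N) {c : ℝ} (h : ∀ ξ : Fin N → ℝ, (∑ i, ξ i ^ 2) = 1 → ξ ⬝ᵥ A.mulVec ξ ≤ c) :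
    lamMax A ≤ c := by
  refine csSup_le ⟨_, eig_mem A hA ⟨0, hN⟩⟩ ?_
  rintro x ⟨ξ, hξ, rfl⟩
  exact h ξ hξ

lemma lamMax_eq_max_eig (hN : 0 < N) :
    lamMax A = Finset.univ.sup' (univ_ne hN) hA.eigenvalues := by
  refine le_antisymm (lamMax_le A hA hN fun ξ hξ => ray_le_max A hA hN ξ hξ) ?_
  obtain ⟨i, _, hi⟩ := Finset.exists_mem_eq_sup' (univ_ne hN) hA.eigenvalues
  rw [hi]
  exact le_csSup (ray_bddAbove A hA hN) (eig_mem A hA i)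

lemma sum_eig_eq_trace : ∑ i, hA.eigenvalues i = A.trace := by
  conv_rhs => rw [hA.spectral_theorem, Unitary.conjStarAlgAut_apply]
  rw [Matrix.trace_mul_cycle]
  rw [show star (hA.eigenvectorUnitary : Matrix (Fin N) (Fin N) ℝ) * (hA.eigenvectorUnitary : Matrix (Fin N) (Fin N) ℝ) = 1 from (Matrix.mem_unitaryGroup_iff').mp (hA.eigenvectorUnitary).2]
  rw [one_mul, Matrix.trace_diagonal]
  simp

end


theorem stmt7 (N : ℕ) (hN : 2 ≤ N) (e : ℝ) (he : 0 < e) (w : Fin N → ℝ)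
    (H : Matrix (Fin N) (Fin N) ℝ) (hsymm : H.IsSymm) (htr : H.trace = 0)
    (hS : (N : ℝ) / 2 * lamMax (vecMulVec w w - H) < e) :
    1 / 2 * ∑ i, w i ^ 2 < e ∧ symOpNorm H ≤ 2 * e * ((N : ℝ) - 1) / N := by
  have hN0 : 0 < N := by omega
  have hNR : (0:ℝ) < N := by exact_mod_cast hN0
  have hNR2 : (2:ℝ) ≤ N := by exact_mod_cast hN
  have hH : H.IsHermitian := by
    rw [Matrix.IsHermitian, conjTranspose_eq_transpose_of_trivial]; exact hsymm
  set A := vecMulVec w w - H with hAdef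
  have hA : A.IsHermitian := by
    rw [Matrix.IsHermitian, conjTranspose_eq_transpose_of_trivial, transpose_sub, hsymm]
    congr 1
    ext i j
    simp [vecMulVec_apply, transpose_apply, mul_comm]
  have hvvmv : ∀ ξ : Fin N → ℝ, (vecMulVec w w).mulVec ξ = (w ⬝ᵥ ξ) • w := by
    intro ξ; ext i
    simp only [mulVec, dotProduct, vecMulVec_apply, Pi.smul_apply, smul_eq_mul, Finset.sum_mul]
    exact Finset.sum_congr rfl fun j _ => by ring
  have hvv : ∀ ξ : Fin N → ℝ, ξ ⬝ᵥ (vecMulVec w w).mulVec ξ = (w ⬝ᵥ ξ)^2 := by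
    intro ξ
    rw [hvvmv, dotProduct_smul, smul_eq_mul, dotProduct_comm, sq]
  have hAdot : ∀ ξ : Fin N → ℝ, ξ ⬝ᵥ A.mulVec ξ = (w ⬝ᵥ ξ)^2 - ξ ⬝ᵥ H.mulVec ξ := by
    intro ξ; rw [hAdef, sub_mulVec, dotProduct_sub, hvv]
  have hsingle : ∀ (B : Matrix (Fin N) (Fin N) ℝ) (i : Fin N),
      (Pi.single i 1 : Fin N → ℝ) ⬝ᵥ B.mulVec (Pi.single i 1) = B i i := by
    intro B i
    simp [mulVec, dotProduct, Pi.single_apply, mul_ite, ite_mul, Finset.sum_ite_eq']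
  have hunit : ∀ i : Fin N, ∑ j, (Pi.single i 1 : Fin N → ℝ) j ^ 2 = 1 := by
    intro i
    simp [Pi.single_apply, apply_ite (· ^ 2), Finset.sum_ite_eq']
  have hdiag : ∀ (B : Matrix (Fin N) (Fin N) ℝ), B.IsHermitian → ∀ i, B i i ≤ lamMax B := by
    intro B hB i
    rw [← hsingle B i]
    exact rayleigh_le_lamMax B hB hN0 _ (hunit i)
  have htrace_le : ∀ (B : Matrix (Fin N) (Fin N) ℝ), B.IsHermitian → B.trace ≤ N * lamMax B := by
    intro B hB
    calc B.trace = ∑ i, B i i := by simp [Matrix.trace, Matrix.diag]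
      _ ≤ ∑ _i : Fin N, lamMax B := Finset.sum_le_sum fun i _ => hdiag B hB i
      _ = N * lamMax B := by
          rw [Finset.sum_const, nsmul_eq_mul, Finset.card_univ, Fintype.card_fin]
  have htrA : A.trace = ∑ i, w i ^ 2 := by
    rw [hAdef, trace_sub, htr, sub_zero]
    simp [Matrix.trace, Matrix.diag, vecMulVec_apply, sq]
  have h1 : ∑ i, w i ^ 2 ≤ (N:ℝ) * lamMax A := htrA ▸ htrace_le A hA
  have hwsq : 0 ≤ ∑ i, w i ^ 2 := Finset.sum_nonneg fun i _ => sq_nonneg _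
  have part1 : 1 / 2 * ∑ i, w i ^ 2 < e := by linarith
  have hL0 : 0 ≤ lamMax A := by
    by_contra hc
    push_neg at hc
    nlinarith
  have hnegH_le : lamMax (-H) ≤ lamMax A := by
    apply lamMax_le (-H) hH.neg hN0
    intro ξ hξ
    have h2 : ξ ⬝ᵥ (-H).mulVec ξ = ξ ⬝ᵥ A.mulVec ξ - (w ⬝ᵥ ξ)^2 := by
      rw [hAdot ξ, neg_mulVec, dotProduct_neg]; ring
    have h3 := rayleigh_le_lamMax A hA hN0 ξ hξ
    rw [h2]
    nlinarith [sq_nonneg (w ⬝ᵥ ξ)]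
  have hnegH0 : 0 ≤ lamMax (-H) := by
    have htr' : (-H).trace = 0 := by rw [trace_neg, htr, neg_zero]
    have h4 := htrace_le (-H) hH.neg
    rw [htr'] at h4
    by_contra hc
    push_neg at hc
    nlinarith
  have hHmax : lamMax H ≤ ((N:ℝ) - 1) * lamMax (-H) := by
    rw [lamMax_eq_max_eig H hH hN0]
    obtain ⟨i, _, hi⟩ := Finset.exists_mem_eq_sup' (univ_ne hN0) hH.eigenvalues
    rw [hi]
    have hsum : ∑ j, hH.eigenvalues j = 0 := by
      rw [sum_eig_eq_trace H hH, htr]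
    have hneg : ∀ j, - hH.eigenvalues j ≤ lamMax (-H) := by
      intro j
      have h3 : evec H hH j ⬝ᵥ (-H).mulVec (evec H hH j) = - hH.eigenvalues j := by
        rw [neg_mulVec, dotProduct_neg, evec_rayleigh H hH j]
      rw [← h3]
      exact rayleigh_le_lamMax (-H) hH.neg hN0 _ (evec_unit H hH j)
    have h5 := Finset.add_sum_erase Finset.univ hH.eigenvalues (Finset.mem_univ i)
    rw [hsum] at h5
    have hsplit : hH.eigenvalues i = ∑ j ∈ Finset.univ.erase i, (- hH.eigenvalues j) := by
      rw [Finset.sum_neg_distrib]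
      linarith
    rw [hsplit]
    calc ∑ j ∈ Finset.univ.erase i, (- hH.eigenvalues j)
        ≤ ∑ _j ∈ Finset.univ.erase i, lamMax (-H) := Finset.sum_le_sum fun j _ => hneg j
      _ = ((Finset.univ.erase i).card : ℝ) * lamMax (-H) := by
          rw [Finset.sum_const, nsmul_eq_mul]
      _ = ((N:ℝ) - 1) * lamMax (-H) := by
          rw [Finset.card_erase_of_mem (Finset.mem_univ i), Finset.card_univ, Fintype.card_fin,
            Nat.cast_sub (by omega : 1 ≤ N), Nat.cast_one]
  have hL2 : lamMax A ≤ 2 * e / N := by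
    rw [le_div_iff₀ hNR]
    nlinarith
  refine ⟨part1, ?_⟩
  have hN1 : (0:ℝ) ≤ (N:ℝ) - 1 := by linarith
  calc symOpNorm H = max (lamMax H) (lamMax (-H)) := rfl
    _ ≤ ((N:ℝ) - 1) * lamMax (-H) := max_le hHmax (by nlinarith)
    _ ≤ ((N:ℝ) - 1) * lamMax A := mul_le_mul_of_nonneg_left hnegH_le hN1
    _ ≤ ((N:ℝ) - 1) * (2 * e / N) := mul_le_mul_of_nonneg_left hL2 hN1
    _ = 2 * e * ((N:ℝ) - 1) / N := by ring
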